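/- Let f be a symmetric norm on ℝ^n and let ‖·‖_f be the induced unitarily invariant norm on B(H). Then ‖·‖_f is an algebra norm (that is, ‖AB‖_f ≤ ‖A‖_f · ‖B‖_f for all A, B ∈ B(H) and ‖I‖_f = f(1, 1, …, 1) = 1) if and only if ‖·‖_f is the operator norm, i.e., ‖A‖_f = s_1(A) for all A ∈ B(H). -/

import Mathlib

open scoped InnerProductSpace

variable {H : Type*} [NormedAddCommGroup H] [InnerProductSpace ℂ H] [CompleteSpace H]

/-- The `k`-th singular value (1-indexed) of a bounded operator `A`:
`s_k(A) = inf {‖A - X‖ : rank X < k}`. -/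
noncomputable def sval (k : ℕ) (A : H →L[ℂ] H) : ℝ :=
  sInf { r : ℝ | ∃ X : H →L[ℂ] H,
    Module.rank ℂ (LinearMap.range (X : H →ₗ[ℂ] H)) < (k : Cardinal) ∧ r = ‖A - X‖ }

/-- `f : ℝ^n → ℝ` is a symmetric norm: a norm invariant under permutations of the
coordinates and under sign changes of the coordinates. -/
structure IsSymmetricNorm (n : ℕ) (f : (Fin n → ℝ) → ℝ) : Prop where
  triangle : ∀ x y, f (x + y) ≤ f x + f y
  homog : ∀ (t : ℝ) (x), f (t • x) = |t| * f x
  definite : ∀ x, x ≠ 0 → 0 < f x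
  perm_invariant : ∀ (σ : Equiv.Perm (Fin n)) (x), f (fun i => x (σ i)) = f x
  sign_invariant : ∀ (ε : Fin n → ℝ), (∀ i, ε i = 1 ∨ ε i = -1) →
    ∀ x, f (fun i => ε i * x i) = f x

/-- The unitarily invariant norm induced by a symmetric norm `f` on `ℝ^n`:
`‖A‖_f = f (s_1(A), …, s_n(A))`. -/
noncomputable def normf (n : ℕ) (f : (Fin n → ℝ) → ℝ) (A : H →L[ℂ] H) : ℝ :=
  f (fun j : Fin n => sval (j.1 + 1) A)

/-! ### Auxiliary lemmas about `sval` -/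

lemma sval_set_lowerBound (k : ℕ) (A : H →L[ℂ] H) :
    ∀ r ∈ { r : ℝ | ∃ X : H →L[ℂ] H,
      Module.rank ℂ (LinearMap.range (X : H →ₗ[ℂ] H)) < (k : Cardinal) ∧ r = ‖A - X‖ },
      (0 : ℝ) ≤ r := by
  rintro r ⟨X, -, rfl⟩
  exact norm_nonneg _

lemma norm_mem_sval_set (k : ℕ) (hk : 0 < k) (A : H →L[ℂ] H) :
    ‖A‖ ∈ { r : ℝ | ∃ X : H →L[ℂ] H,
      Module.rank ℂ (LinearMap.range (X : H →ₗ[ℂ] H)) < (k : Cardinal) ∧ r = ‖A - X‖ } := by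
  refine ⟨0, ?_, by simp⟩
  have h0 : LinearMap.range ((0 : H →L[ℂ] H) : H →ₗ[ℂ] H) = ⊥ := by simp
  rw [h0, rank_bot]
  exact_mod_cast hk

lemma sval_nonneg (k : ℕ) (A : H →L[ℂ] H) : 0 ≤ sval k A :=
  Real.sInf_nonneg (sval_set_lowerBound k A)

lemma sval_le_norm (k : ℕ) (hk : 0 < k) (A : H →L[ℂ] H) : sval k A ≤ ‖A‖ :=
  csInf_le ⟨0, sval_set_lowerBound k A⟩ (norm_mem_sval_set k hk A)

lemma sval_one_eq (A : H →L[ℂ] H) : sval 1 A = ‖A‖ := by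
  refine le_antisymm (sval_le_norm 1 one_pos A) (le_csInf ⟨‖A‖, norm_mem_sval_set 1 one_pos A⟩ ?_)
  rintro r ⟨X, hX, rfl⟩
  have h1 : Module.rank ℂ (LinearMap.range (X : H →ₗ[ℂ] H)) = 0 := by
    rwa [← Cardinal.lt_one_iff_zero, ← Nat.cast_one]
  have h2 : LinearMap.range (X : H →ₗ[ℂ] H) = ⊥ :=
    (Submodule.rank_eq_zero (R := ℂ) (M := H)).mp h1
  have h3 : (X : H →ₗ[ℂ] H) = 0 := LinearMap.range_eq_bot.mp h2
  have h4 : X = 0 := by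
    ext x
    exact DFunLike.congr_fun h3 x
  rw [h4, sub_zero]

/-! ### Auxiliary lemmas about symmetric norms -/

lemma IsSymmetricNorm.update_le {n : ℕ} {f : (Fin n → ℝ) → ℝ} (hf : IsSymmetricNorm n f)
    (z : Fin n → ℝ) (i : Fin n) {a b : ℝ} (hab : |a| ≤ |b|) :
    f (Function.update z i a) ≤ f (Function.update z i b) := by
  rcases eq_or_ne b 0 with hb | hb
  · have ha : a = 0 := by
      rw [hb, abs_zero] at hab
      exact abs_eq_zero.mp (le_antisymm hab (abs_nonneg a))
    rw [ha, hb]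
  · set u : Fin n → ℝ := Function.update z i b with hu
    set u' : Fin n → ℝ := Function.update z i (-b) with hu'
    have hfu' : f u' = f u := by
      have := hf.sign_invariant (fun j => if j = i then -1 else 1)
        (fun j => by by_cases h : j = i <;> simp [h]) u
      have heq : (fun j => (if j = i then (-1 : ℝ) else 1) * u j) = u' := by
        funext j
        by_cases h : j = i
        · subst h; simp [hu, hu', Function.update_self]
        · simp [h, hu, hu', Function.update_of_ne h]
      rwa [heq] at this
    set t : ℝ := (a / b + 1) / 2 with ht
    have habs : |a / b| ≤ 1 := by
      rw [abs_div]
      rw [div_le_one (abs_pos.mpr hb)]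
      exact hab
    have ht0 : 0 ≤ t := by
      have := neg_le_of_abs_le habs
      simp only [ht]; linarith
    have ht1 : t ≤ 1 := by
      have := le_of_abs_le habs
      simp only [ht]; linarith
    have hdecomp : Function.update z i a = t • u + (1 - t) • u' := by
      funext j
      by_cases h : j = i
      · subst h
        simp only [Pi.add_apply, Pi.smul_apply, smul_eq_mul, hu, hu', Function.update_self]
        field_simp [ht]
        have hba : b * (a / b) = a := by field_simp
        linear_combination (-2*b) * ht - hba
      · simp only [Pi.add_apply, Pi.smul_apply, smul_eq_mul, hu, hu',
          Function.update_of_ne h]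
        ring
    calc f (Function.update z i a) = f (t • u + (1 - t) • u') := by rw [hdecomp]
      _ ≤ f (t • u) + f ((1 - t) • u') := hf.triangle _ _
      _ = |t| * f u + |1 - t| * f u' := by rw [hf.homog, hf.homog]
      _ = t * f u + (1 - t) * f u := by
          rw [hfu', abs_of_nonneg ht0, abs_of_nonneg (by linarith : (0:ℝ) ≤ 1 - t)]
      _ = f u := by ring

lemma IsSymmetricNorm.mono {n : ℕ} {f : (Fin n → ℝ) → ℝ} (hf : IsSymmetricNorm n f)
    {x y : Fin n → ℝ} (h : ∀ i, |x i| ≤ y i) : f x ≤ f y := by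
  have key : ∀ k : ℕ, k ≤ n → f x ≤ f (fun i => if (i : ℕ) < k then y i else x i) := by
    intro k
    induction k with
    | zero =>
      intro _
      have : (fun i : Fin n => if (i : ℕ) < 0 then y i else x i) = x := by
        funext i; simp
      rw [this]
    | succ k ih =>
      intro hk
      have hkn : k < n := hk
      set w : Fin n → ℝ := fun i => if (i : ℕ) < k then y i else x i with hw
      have h1 : f x ≤ f w := ih (le_of_lt hkn)
      set iK : Fin n := ⟨k, hkn⟩ with hiK
      have hwK : w = Function.update w iK (x iK) := by
        funext j
        by_cases hj : j = iK
        · subst hj; simp [hw, hiK, Function.update_self]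
        · rw [Function.update_of_ne hj]
      have hw'K : (fun i : Fin n => if (i : ℕ) < k + 1 then y i else x i)
          = Function.update w iK (y iK) := by
        funext j
        by_cases hj : j = iK
        · subst hj; simp [hiK, Function.update_self]
        · rw [Function.update_of_ne hj]
          have hjk : (j : ℕ) ≠ k := fun hc => hj (Fin.ext hc)
          have : (j : ℕ) < k + 1 ↔ (j : ℕ) < k := by omega
          simp only [hw, this]
      rw [hw'K]
      refine le_trans h1 ?_
      have hxy : |x iK| ≤ y iK := h iK
      have habs : |y iK| = y iK := abs_of_nonneg (le_trans (abs_nonneg _) hxy)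
      have h2 := hf.update_le w iK (a := x iK) (b := y iK) (by rw [habs]; exact hxy)
      rwa [← hwK] at h2
  have := key n le_rfl
  have heq : (fun i : Fin n => if (i : ℕ) < n then y i else x i) = y := by
    funext i; simp [i.2]
  rwa [heq] at this

lemma IsSymmetricNorm.nonneg {n : ℕ} {f : (Fin n → ℝ) → ℝ} (hf : IsSymmetricNorm n f)
    (x : Fin n → ℝ) : 0 ≤ f x := by
  have h0 : f 0 = 0 := by
    have := hf.homog 0 0
    simpa using this
  have := hf.triangle x (-x)
  have hneg : f (-x) = f x := by
    have := hf.homog (-1) x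
    simpa using this
  have hsum : f (x + -x) = 0 := by rw [add_neg_cancel, h0]
  rw [hsum, hneg] at this
  linarith

/-! ### The identity and rank-one projections -/

lemma sval_id_eq_one (k : ℕ) (hk : 0 < k) (hkn : (k : Cardinal) ≤ Module.rank ℂ H) :
    sval k (1 : H →L[ℂ] H) = 1 := by
  have hnt : Nontrivial H := by
    refine (rank_pos_iff_nontrivial (R := ℂ)).mp ?_
    calc (0 : Cardinal) < (k : Cardinal) := by exact_mod_cast hk
      _ ≤ Module.rank ℂ H := hkn
  have hlb : ∀ r ∈ { r : ℝ | ∃ X : H →L[ℂ] H,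
      Module.rank ℂ (LinearMap.range (X : H →ₗ[ℂ] H)) < (k : Cardinal) ∧ r = ‖(1 : H →L[ℂ] H) - X‖ },
      (1 : ℝ) ≤ r := by
    rintro r ⟨X, hX, rfl⟩
    set K := LinearMap.range (X : H →ₗ[ℂ] H) with hK
    have hfin : Module.Finite ℂ K := by
      refine Module.rank_lt_aleph0_iff.mp ?_
      exact lt_trans hX (Cardinal.nat_lt_aleph0 k)
    have hKbot : Kᗮ ≠ ⊥ := by
      intro hbot
      have htop : K = ⊤ := Submodule.orthogonal_eq_bot_iff.mp hbot
      have : Module.rank ℂ H < (k : Cardinal) := by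
        rw [← rank_top ℂ H, ← htop]
        exact hX
      exact absurd (lt_of_le_of_lt hkn this) (lt_irrefl _)
    obtain ⟨v, hvK, hv0⟩ := (Submodule.ne_bot_iff _).mp hKbot
    set u : H := ‖v‖⁻¹ • v with hu
    have hun : ‖u‖ = 1 := by
      rw [hu, norm_smul, norm_inv, norm_norm, inv_mul_cancel₀ (norm_ne_zero_iff.mpr hv0)]
    have huK : u ∈ Kᗮ := Submodule.smul_mem _ _ hvK
    have hXu : ⟪X u, u⟫_ℂ = 0 := by
      refine (Submodule.mem_orthogonal K u).mp huK (X u) ?_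
      exact LinearMap.mem_range.mpr ⟨u, rfl⟩
    have hinner : ⟪((1 : H →L[ℂ] H) - X) u, u⟫_ℂ = 1 := by
      rw [ContinuousLinearMap.sub_apply, ContinuousLinearMap.one_apply, inner_sub_left, hXu,
        sub_zero, inner_self_eq_norm_sq_to_K, hun]
      norm_num
    have h1 : (1 : ℝ) ≤ ‖((1 : H →L[ℂ] H) - X) u‖ := by
      have := norm_inner_le_norm (𝕜 := ℂ) (((1 : H →L[ℂ] H) - X) u) u
      rw [hinner, hun, mul_one] at this
      simpa using this
    calc (1 : ℝ) ≤ ‖((1 : H →L[ℂ] H) - X) u‖ := h1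
      _ ≤ ‖(1 : H →L[ℂ] H) - X‖ * ‖u‖ := ContinuousLinearMap.le_opNorm _ _
      _ = ‖(1 : H →L[ℂ] H) - X‖ := by rw [hun, mul_one]
  have hmem : (1 : ℝ) ∈ { r : ℝ | ∃ X : H →L[ℂ] H,
      Module.rank ℂ (LinearMap.range (X : H →ₗ[ℂ] H)) < (k : Cardinal) ∧ r = ‖(1 : H →L[ℂ] H) - X‖ } := by
    have := norm_mem_sval_set k hk (1 : H →L[ℂ] H)
    rwa [norm_one] at this
  exact le_antisymm (csInf_le ⟨0, sval_set_lowerBound k _⟩ hmem) (le_csInf ⟨1, hmem⟩ hlb)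

theorem stmt6 (n : ℕ) (hn : 0 < n) (hdim : (n : Cardinal) ≤ Module.rank ℂ H)
    (f : (Fin n → ℝ) → ℝ) (hf : IsSymmetricNorm n f) :
    ((∀ A B : H →L[ℂ] H, normf n f (A ∘L B) ≤ normf n f A * normf n f B) ∧
        normf n f (1 : H →L[ℂ] H) = 1 ∧ f (fun _ => 1) = 1) ↔
      (∀ A : H →L[ℂ] H, normf n f A = sval 1 A) := by
  have hnt : Nontrivial H := by
    refine (rank_pos_iff_nontrivial (R := ℂ)).mp (lt_of_lt_of_le ?_ hdim)
    exact_mod_cast hn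
  constructor
  · rintro ⟨hsub, hI, hone⟩ A
    -- construct a rank-one projection
    obtain ⟨w, hw0⟩ := exists_ne (0 : H)
    set v : H := ‖w‖⁻¹ • w with hv
    have hvn : ‖v‖ = 1 := by
      rw [hv, norm_smul, norm_inv, norm_norm, inv_mul_cancel₀ (norm_ne_zero_iff.mpr hw0)]
    set P : H →L[ℂ] H := (innerSL ℂ v).smulRight v with hP
    have hPapp : ∀ x, P x = ⟪v, x⟫_ℂ • v := fun x => rfl
    have hvv : ⟪v, v⟫_ℂ = 1 := by
      rw [inner_self_eq_norm_sq_to_K, hvn]; norm_num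
    have hPP : P ∘L P = P := by
      ext x
      simp only [ContinuousLinearMap.coe_comp', Function.comp_apply, hPapp]
      rw [inner_smul_right, hvv, mul_one]
    have hPnorm : ‖P‖ = 1 := by
      refine le_antisymm ?_ ?_
      · refine ContinuousLinearMap.opNorm_le_bound _ zero_le_one ?_
        intro x
        rw [hPapp, norm_smul, hvn, mul_one, one_mul]
        calc ‖⟪v, x⟫_ℂ‖ ≤ ‖v‖ * ‖x‖ := norm_inner_le_norm v x
          _ = ‖x‖ := by rw [hvn, one_mul]
      · have := ContinuousLinearMap.le_opNorm P v
        rw [hPapp, hvv, one_smul, hvn, mul_one] at this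
        exact this
    have hPrank : Module.rank ℂ (LinearMap.range (P : H →ₗ[ℂ] H)) ≤ 1 := by
      have hle : LinearMap.range (P : H →ₗ[ℂ] H) ≤ Submodule.span ℂ {v} := by
        rintro _ ⟨x, rfl⟩
        have : (P : H →ₗ[ℂ] H) x = ⟪v, x⟫_ℂ • v := rfl
        rw [this]
        exact Submodule.smul_mem _ _ (Submodule.mem_span_singleton_self v)
      calc Module.rank ℂ (LinearMap.range (P : H →ₗ[ℂ] H))
          ≤ Module.rank ℂ (Submodule.span ℂ ({v} : Set H)) := Submodule.rank_mono hle
        _ ≤ Cardinal.mk ({v} : Set H) := rank_span_le _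
        _ = 1 := Cardinal.mk_singleton v
    -- singular values of P
    have hsvalP1 : sval 1 P = 1 := by rw [sval_one_eq, hPnorm]
    have hsvalPk : ∀ k : ℕ, 2 ≤ k → sval k P = 0 := by
      intro k hk
      refine le_antisymm ?_ (sval_nonneg k P)
      refine csInf_le ⟨0, sval_set_lowerBound k P⟩ ?_
      refine ⟨P, ?_, by simp⟩
      calc Module.rank ℂ (LinearMap.range (P : H →ₗ[ℂ] H)) ≤ 1 := hPrank
        _ < (k : Cardinal) := by
            rw [← Nat.cast_one]
            exact Nat.cast_lt.mpr (by omega)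
    set e : Fin n → ℝ := fun j => if (j : ℕ) = 0 then 1 else 0 with he
    have hnormfP : normf n f P = f e := by
      unfold normf
      congr 1
      funext j
      by_cases hj : (j : ℕ) = 0
      · simp only [he, hj, if_pos]
        exact hsvalP1
      · simp only [he, if_neg hj]
        exact hsvalPk _ (by omega)
    set c : ℝ := f e with hc
    have hcpos : 0 < c := by
      refine hf.definite e ?_
      intro hcon
      have := congr_fun hcon ⟨0, hn⟩
      simp [he] at this
    have hc2 : c ≤ c * c := by
      have := hsub P P
      rw [hPP, hnormfP] at this
      exact this
    have hc1 : 1 ≤ c := by nlinarith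
    -- now the main estimate
    set t : ℝ := sval 1 A with hts
    have ht0 : 0 ≤ t := sval_nonneg 1 A
    have htnorm : t = ‖A‖ := sval_one_eq A
    have hupper : normf n f A ≤ t := by
      have hcomp : ∀ j : Fin n, |sval ((j : ℕ) + 1) A| ≤ (fun _ : Fin n => t) j := by
        intro j
        rw [abs_of_nonneg (sval_nonneg _ A), htnorm]
        exact sval_le_norm _ (Nat.succ_pos _) A
      have hmono := hf.mono (x := fun j : Fin n => sval ((j : ℕ) + 1) A)
        (y := fun _ => t) hcomp
      unfold normf
      calc f (fun j : Fin n => sval ((j : ℕ) + 1) A) ≤ f (fun _ => t) := hmono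
        _ = f (t • fun _ => (1 : ℝ)) := by
            congr 1; funext j; simp
        _ = |t| * f (fun _ => (1 : ℝ)) := hf.homog _ _
        _ = t := by rw [abs_of_nonneg ht0, hone, mul_one]
    have hlower : t ≤ normf n f A := by
      have hcomp : ∀ j : Fin n, |if (j : ℕ) = 0 then t else 0| ≤ sval ((j : ℕ) + 1) A := by
        intro j
        by_cases hj : (j : ℕ) = 0
        · rw [if_pos hj, abs_of_nonneg ht0]
          have hj1 : (j : ℕ) + 1 = 1 := by omega
          rw [hj1]
        · rw [if_neg hj, abs_zero]
          exact sval_nonneg _ A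
      have hmono := hf.mono (x := fun j : Fin n => if (j : ℕ) = 0 then t else 0)
        (y := fun j : Fin n => sval ((j : ℕ) + 1) A) hcomp
      have heq2 : (fun j : Fin n => if (j : ℕ) = 0 then t else 0) = t • e := by
        funext j
        by_cases hj : (j : ℕ) = 0 <;> simp [he, hj]
      rw [heq2, hf.homog, abs_of_nonneg ht0] at hmono
      unfold normf
      calc t = t * 1 := (mul_one t).symm
        _ ≤ t * c := by nlinarith
        _ ≤ f (fun j : Fin n => sval ((j : ℕ) + 1) A) := hmono
    exact le_antisymm hupper hlower
  · intro h
    refine ⟨?_, ?_, ?_⟩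
    · intro A B
      rw [h, h, h, sval_one_eq, sval_one_eq, sval_one_eq]
      exact ContinuousLinearMap.opNorm_comp_le A B
    · rw [h, sval_one_eq, norm_one]
    · have heq : (fun j : Fin n => sval ((j : ℕ) + 1) (1 : H →L[ℂ] H)) = fun _ => 1 := by
        funext j
        refine sval_id_eq_one _ (Nat.succ_pos _) ?_
        calc (((j : ℕ) + 1 : ℕ) : Cardinal) ≤ (n : Cardinal) := by
              exact_mod_cast Nat.succ_le_of_lt j.2
          _ ≤ Module.rank ℂ H := hdim
      have := h (1 : H →L[ℂ] H)
      rw [sval_one_eq, norm_one] at this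
      unfold normf at this
      rwa [heq] at this
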